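/- Fix m ≥ 3 and let μ ∈ Opt(m). For any vertex x ∈ supp μ̄, μ̄(x) ≤ 2/m, with equality if and only if x belongs to every unlabeled m-cycle of the support graph G_μ. -/

import Mathlib

open Finset

/-- The cyclic successor of an index in `Fin m`. -/
def cnext {m : ℕ} (i : Fin m) : Fin m := ⟨(i.1 + 1) % m, Nat.mod_lt _ i.pos⟩

/-- `μ` is a probability mass on the 2-element subsets of `X`: it is nonnegative,
vanishes on the diagonal, and has total mass 1. -/
def IsProbMass {X : Type*} [Fintype X] [DecidableEq X] (μ : Sym2 X → ℝ) : Prop :=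
  (∀ e, 0 ≤ μ e) ∧ (∀ e : Sym2 X, e.IsDiag → μ e = 0) ∧ (∑ e : Sym2 X, μ e) = 1

/-- The weight `μ(C)` of the labeled cycle `f 0, f 1, ..., f (m-1), f 0`. -/
def cycleWeight {X : Type*} (μ : Sym2 X → ℝ) {m : ℕ} (f : Fin m → X) : ℝ :=
  ∏ i : Fin m, μ s(f i, f (cnext i))

/-- `β(μ; m)`: the sum of `μ(C)` over all unlabeled `m`-cycles `C` in the complete
graph on `X`, computed as the sum over labeled cycles divided by `2m` (each unlabeled
`m`-cycle has exactly `2m` labelings). -/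
noncomputable def beta {X : Type*} [Fintype X] [DecidableEq X] (μ : Sym2 X → ℝ) (m : ℕ) : ℝ :=
  (∑ f : Fin m → X, if Function.Injective f then cycleWeight μ f else 0) / (2 * m)

/-- `β(m)`: the supremum of `β(μ; m)` over all probability masses `μ` on the
2-element subsets of a finite set (every finite set being a copy of some `Fin n`). -/
noncomputable def betaSup (m : ℕ) : ℝ :=
  sSup {b : ℝ | ∃ (n : ℕ) (μ : Sym2 (Fin n) → ℝ), IsProbMass μ ∧ b = beta μ m}

/-- The weighted degree `μ̄(x) = ∑_{y ≠ x} μ(xy)`. -/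
noncomputable def wdeg {X : Type*} [Fintype X] [DecidableEq X] (μ : Sym2 X → ℝ) (x : X) : ℝ :=
  ∑ y ∈ Finset.univ.filter (· ≠ x), μ s(x, y)

/-- The support graph `G_μ`, whose edges are the pairs of positive mass. -/
def supportGraph {X : Type*} (μ : Sym2 X → ℝ) : SimpleGraph X where
  Adj x y := x ≠ y ∧ 0 < μ s(x, y)
  symm := ⟨fun x y h => ⟨h.1.symm, by rw [Sym2.eq_swap]; exact h.2⟩⟩
  loopless := ⟨fun x h => h.1 rfl⟩

set_option linter.unusedSectionVars false

lemma cnext_eq_add_one {m : ℕ} [NeZero m] (i : Fin m) : cnext i = i + 1 := by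
  ext
  simp only [cnext, Fin.add_def, Fin.val_one']
  conv_lhs => rw [Nat.add_mod]
  conv_rhs => rw [Nat.add_mod]
  rw [Nat.mod_mod_of_dvd _ dvd_rfl]

section
variable {X : Type*} [Fintype X] [DecidableEq X] {μ : Sym2 X → ℝ}

lemma IsProbMass.le_one (hμ : IsProbMass μ) (e : Sym2 X) : μ e ≤ 1 := by
  rw [← hμ.2.2]
  exact Finset.single_le_sum (fun e _ => hμ.1 e) (mem_univ e)

lemma card_fiber {a b : X} (hab : a ≠ b) :
    (univ.filter (fun p : X × X => s(p.1, p.2) = s(a, b))).card = 2 := by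
  have h : (univ.filter (fun p : X × X => s(p.1, p.2) = s(a, b)))
      = {(a, b), (b, a)} := by
    ext p
    simp only [mem_filter, mem_univ, true_and, Sym2.eq_iff, mem_insert, mem_singleton,
      Prod.ext_iff]
  rw [h, card_insert_of_notMem (by simp [Prod.ext_iff, hab]), card_singleton]

lemma sum_pairs (hμ : IsProbMass μ) : ∑ p : X × X, μ s(p.1, p.2) = 2 := by
  calc ∑ p : X × X, μ s(p.1, p.2)
      = ∑ p : X × X, ∑ e : Sym2 X, if s(p.1, p.2) = e then μ e else 0 := by
        refine Finset.sum_congr rfl fun p _ => ?_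
        rw [Finset.sum_ite_eq univ s(p.1, p.2) μ, if_pos (mem_univ _)]
    _ = ∑ e : Sym2 X, ∑ p : X × X, if s(p.1, p.2) = e then μ e else 0 := Finset.sum_comm
    _ = ∑ e : Sym2 X, 2 * μ e := by
        refine Finset.sum_congr rfl fun e _ => ?_
        rw [← Finset.sum_filter]
        induction e using Sym2.ind with
        | _ a b =>
          by_cases hab : a = b
          · subst hab
            rw [hμ.2.1 _ (by simp), Finset.sum_const, smul_zero, mul_zero]
          · rw [Finset.sum_const, card_fiber hab]
            simp
    _ = 2 := by rw [← Finset.mul_sum, hμ.2.2, mul_one]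

end


noncomputable def Tsum {X : Type*} [Fintype X] [DecidableEq X] (μ : Sym2 X → ℝ) (m : ℕ) : ℝ :=
  ∑ f : Fin m → X, if Function.Injective f then cycleWeight μ f else 0

/-- A covering set of indices: every index is an endpoint of an edge `{k, cnext k}`, `k ∈ Kset`. -/
def Kset (m : ℕ) : Finset (Fin m) :=
  univ.filter (fun k => k.1 = m - 1 ∨ (k.1 % 2 = 0 ∧ k.1 + 1 < m))

lemma Kset_cover {m : ℕ} (hm : 3 ≤ m) (j : Fin m) :
    ∃ k ∈ Kset m, j = k ∨ j = cnext k := by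
  have hj := j.isLt
  rcases eq_or_ne j.1 (m - 1) with h | h
  · exact ⟨j, by simp [Kset, h], Or.inl rfl⟩
  · have hj' : j.1 < m - 1 := by omega
    rcases Nat.even_or_odd j.1 with he | ho
    · refine ⟨j, ?_, Or.inl rfl⟩
      simp only [Kset, mem_filter, mem_univ, true_and]
      exact Or.inr ⟨Nat.even_iff.mp he, by omega⟩
    · have h1 : 1 ≤ j.1 := by
        rcases Nat.eq_zero_or_pos j.1 with h0 | h0
        · exact absurd (h0 ▸ ho) (by simp)
        · exact h0
      refine ⟨⟨j.1 - 1, by omega⟩, ?_, Or.inr ?_⟩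
      · simp only [Kset, mem_filter, mem_univ, true_and]
        refine Or.inr ⟨?_, by omega⟩
        have := Nat.odd_iff.mp ho
        omega
      · ext
        simp only [cnext]
        rw [Nat.sub_add_cancel h1, Nat.mod_eq_of_lt hj]

section
variable {X : Type*} [Fintype X] [DecidableEq X] {μ : Sym2 X → ℝ} {m : ℕ}

lemma cycleWeight_nonneg (h0 : ∀ e, 0 ≤ μ e) (f : Fin m → X) : 0 ≤ cycleWeight μ f :=
  Finset.prod_nonneg fun _ _ => h0 _

lemma Tsum_nonneg (h0 : ∀ e, 0 ≤ μ e) : 0 ≤ Tsum μ m :=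
  Finset.sum_nonneg fun f _ => by
    by_cases hf : Function.Injective f <;> simp [hf, cycleWeight_nonneg h0]

set_option maxHeartbeats 1000000 in
lemma Tsum_le (hm : 3 ≤ m) (hμ : IsProbMass μ) : Tsum μ m ≤ 2 ^ m := by
  classical
  set K := Kset m with hK
  -- Step 1: drop to the covering edges
  have step1 : Tsum μ m ≤ ∑ f : Fin m → X, ∏ k ∈ K, μ s(f k, f (cnext k)) := by
    refine Finset.sum_le_sum fun f _ => ?_
    by_cases hf : Function.Injective f
    · simp only [hf, if_true, cycleWeight]
      rw [← Finset.prod_sdiff (Finset.subset_univ K)]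
      have h1 : ∏ i ∈ univ \ K, μ s(f i, f (cnext i)) ≤ 1 :=
        Finset.prod_le_one (fun _ _ => hμ.1 _) (fun _ _ => hμ.le_one _)
      calc (∏ i ∈ univ \ K, μ s(f i, f (cnext i))) * ∏ i ∈ K, μ s(f i, f (cnext i))
          ≤ 1 * ∏ i ∈ K, μ s(f i, f (cnext i)) :=
            mul_le_mul_of_nonneg_right h1 (Finset.prod_nonneg fun _ _ => hμ.1 _)
        _ = _ := one_mul _
    · simp only [hf, if_false]
      exact Finset.prod_nonneg fun _ _ => hμ.1 _
  -- Step 2: the injection into K-indexed pairs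
  set Φ : (Fin m → X) → ({k // k ∈ K} → X × X) := fun f k => (f k.1, f (cnext k.1)) with hΦdef
  have hΦ : Function.Injective Φ := by
    intro f g hfg
    funext j
    obtain ⟨k, hk, hc⟩ := Kset_cover hm j
    have h2 := congrFun hfg ⟨k, hk⟩
    rcases hc with rfl | rfl
    · exact congrArg Prod.fst h2
    · exact congrArg Prod.snd h2
  have step2 : ∑ f : Fin m → X, ∏ k ∈ K, μ s(f k, f (cnext k))
      ≤ ∑ h : {k // k ∈ K} → X × X, ∏ k : {k // k ∈ K}, μ s((h k).1, (h k).2) := by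
    have hrw : ∀ f : Fin m → X, ∏ k ∈ K, μ s(f k, f (cnext k))
        = ∏ k : {k // k ∈ K}, μ s((Φ f k).1, (Φ f k).2) := by
      intro f
      rw [← Finset.prod_subtype K (fun k => Iff.rfl) (fun k => μ s(f k, f (cnext k)))]
    calc ∑ f : Fin m → X, ∏ k ∈ K, μ s(f k, f (cnext k))
        = ∑ f : Fin m → X, ∏ k : {k // k ∈ K}, μ s((Φ f k).1, (Φ f k).2) := by
          exact Finset.sum_congr rfl fun f _ => hrw f
      _ = ∑ h ∈ Finset.univ.image Φ, ∏ k : {k // k ∈ K}, μ s((h k).1, (h k).2) :=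
          (Finset.sum_image (f := fun h : {k // k ∈ K} → X × X =>
            ∏ k : {k // k ∈ K}, μ s((h k).1, (h k).2)) (g := Φ)
            (fun a _ b _ hab => hΦ hab)).symm
      _ ≤ _ := Finset.sum_le_sum_of_subset_of_nonneg (Finset.subset_univ _)
          (fun h _ _ => Finset.prod_nonneg fun _ _ => hμ.1 _)
  have step3 : ∑ h : {k // k ∈ K} → X × X, ∏ k : {k // k ∈ K}, μ s((h k).1, (h k).2)
      = 2 ^ (Fintype.card {k // k ∈ K}) := by
    rw [← Fintype.piFinset_univ, ← Finset.prod_univ_sum (fun _ => (univ : Finset (X × X)))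
      (fun _ p => μ s(p.1, p.2))]
    rw [Finset.prod_congr rfl fun k _ => sum_pairs hμ, Finset.prod_const, Finset.card_univ]
  have hcard : Fintype.card {k // k ∈ K} ≤ m := by
    rw [Fintype.card_coe]
    exact le_trans (Finset.card_le_univ K) (by simp)
  calc Tsum μ m ≤ _ := step1
    _ ≤ _ := step2
    _ = 2 ^ (Fintype.card {k // k ∈ K}) := step3
    _ ≤ 2 ^ m := by
        exact pow_le_pow_right₀ one_le_two hcard

end



/-- `Sym2` congruence of an equivalence. -/
def sym2Equiv {X Y : Type*} (g : X ≃ Y) : Sym2 X ≃ Sym2 Y where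
  toFun := Sym2.map g
  invFun := Sym2.map g.symm
  left_inv e := by rw [Sym2.map_map, Equiv.symm_comp_self, Sym2.map_id, id_eq]
  right_inv e := by rw [Sym2.map_map, Equiv.self_comp_symm, Sym2.map_id, id_eq]

section
variable {X : Type*} [Fintype X] [DecidableEq X] {μ : Sym2 X → ℝ} {m : ℕ}

lemma beta_eq_Tsum : beta μ m = Tsum μ m / (2 * m) := rfl

/-- Transporting a probability mass along an equivalence. -/
lemma transport {Y : Type*} [Fintype Y] [DecidableEq Y] (g : X ≃ Y) (hμ : IsProbMass μ) :
    IsProbMass (fun e : Sym2 Y => μ (Sym2.map g.symm e)) ∧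
      beta (fun e : Sym2 Y => μ (Sym2.map g.symm e)) m = beta μ m := by
  constructor
  · refine ⟨fun e => hμ.1 _, fun e he => hμ.2.1 _ (he.map), ?_⟩
    exact Fintype.sum_equiv (sym2Equiv g.symm) _ _ (fun e => rfl) |>.trans hμ.2.2
  · rw [beta_eq_Tsum, beta_eq_Tsum]
    congr 1
    refine Fintype.sum_equiv (Equiv.arrowCongr (Equiv.refl (Fin m)) g.symm) _ _ fun f => ?_
    have hinj : Function.Injective (((Equiv.refl (Fin m)).arrowCongr g.symm) f)
        ↔ Function.Injective f := by
      constructor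
      · intro h a b hab
        exact h (show g.symm (f a) = g.symm (f b) from congrArg g.symm hab)
      · intro h a b hab
        exact h (g.symm.injective hab)
    by_cases hf : Function.Injective f
    · rw [if_pos hf, if_pos (hinj.mpr hf)]
      simp only [cycleWeight, Equiv.arrowCongr_apply, Equiv.coe_refl, Function.comp,
        Equiv.refl_symm, Function.comp_id, id_eq]
      refine Finset.prod_congr rfl fun i _ => ?_
      rw [Sym2.map_pair_eq]
    · rw [if_neg hf, if_neg (fun h => hf (hinj.mp h))]
  
lemma betaSet_bddAbove (hm : 3 ≤ m) :
    BddAbove {b : ℝ | ∃ (n : ℕ) (μ : Sym2 (Fin n) → ℝ), IsProbMass μ ∧ b = beta μ m} := by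
  refine ⟨2 ^ m, fun b hb => ?_⟩
  obtain ⟨n, ν, hν, rfl⟩ := hb
  rw [beta_eq_Tsum]
  calc Tsum ν m / (2 * m) ≤ Tsum ν m := by
        apply div_le_self (Tsum_nonneg hν.1)
        have : (3 : ℝ) ≤ (m : ℝ) := by exact_mod_cast hm
        nlinarith
    _ ≤ 2 ^ m := Tsum_le hm hν

lemma beta_le_betaSup (hm : 3 ≤ m) (hμ : IsProbMass μ) : beta μ m ≤ betaSup m := by
  obtain ⟨h1, h2⟩ := transport (Fintype.equivFin X) hμ
  rw [← h2]
  exact le_csSup (betaSet_bddAbove hm) ⟨Fintype.card X, _, h1, rfl⟩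

end

lemma cnext_ne {m : ℕ} (hm : 3 ≤ m) (i : Fin m) : cnext i ≠ i := by
  haveI : NeZero m := ⟨by omega⟩
  rw [cnext_eq_add_one]
  intro h
  have h2 : i + 1 = i + 0 := by rw [add_zero]; exact h
  have h3 : (1 : Fin m) = 0 := add_left_cancel h2
  have h4 := congrArg Fin.val h3
  rw [Fin.val_one', Nat.mod_eq_of_lt (by omega)] at h4
  simp at h4

lemma cnext_edge_inj {m : ℕ} (hm : 3 ≤ m) :
    Function.Injective (fun i : Fin m => s(i, cnext i)) := by
  haveI : NeZero m := ⟨by omega⟩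
  intro i j hij
  simp only [cnext_eq_add_one] at hij
  rcases Sym2.eq_iff.mp hij with ⟨h1, _⟩ | ⟨h1, h2⟩
  · exact h1
  · exfalso
    have h3 : j + 1 + 1 = j + 0 := by rw [← h1, h2, add_zero]
    rw [add_assoc] at h3
    have h4 := congrArg Fin.val (add_left_cancel h3)
    have h5 : ((1 : Fin m).val + (1 : Fin m).val) % m = 0 := h4
    rw [Fin.val_one'] at h5
    rw [Nat.mod_eq_of_lt (by omega : 1 < m)] at h5
    rw [Nat.mod_eq_of_lt (by omega : 1 + 1 < m)] at h5
    omega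

lemma betaSup_pos {m : ℕ} (hm : 3 ≤ m) : 0 < betaSup m := by
  classical
  haveI : NeZero m := ⟨by omega⟩
  have hm0 : (0 : ℝ) < m := by exact_mod_cast (by omega : 0 < m)
  set Edges : Finset (Sym2 (Fin m)) := univ.image (fun i => s(i, cnext i)) with hE
  set μc : Sym2 (Fin m) → ℝ := fun e => if e ∈ Edges then 1 / (m : ℝ) else 0 with hμc
  have hprob : IsProbMass μc := by
    refine ⟨fun e => ?_, fun e he => ?_, ?_⟩
    · rw [hμc]
      dsimp only
      split <;> positivity
    · rw [hμc]
      dsimp only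
      rw [if_neg]
      intro hmem
      rw [hE] at hmem
      obtain ⟨i, _, hi⟩ := Finset.mem_image.mp hmem
      rw [← hi] at he
      exact cnext_ne hm i (Sym2.mk_isDiag_iff.mp he).symm
    · rw [hμc]
      dsimp only
      rw [Finset.sum_ite_mem, Finset.univ_inter, Finset.sum_const]
      rw [Finset.card_image_of_injective _ (cnext_edge_inj hm), Finset.card_univ,
        Fintype.card_fin]
      rw [nsmul_eq_mul]
      field_simp
  have hval : ∀ i : Fin m, μc s(i, cnext i) = 1 / (m : ℝ) := by
    intro i
    rw [hμc]
    dsimp only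
    rw [if_pos (Finset.mem_image_of_mem _ (mem_univ i))]
  have hTpos : (1 / (m : ℝ)) ^ m ≤ Tsum μc m := by
    have hid : (if Function.Injective (id : Fin m → Fin m)
        then cycleWeight μc (id : Fin m → Fin m) else 0) = (1 / (m : ℝ)) ^ m := by
      rw [if_pos Function.injective_id]
      unfold cycleWeight
      calc ∏ i : Fin m, μc s(id i, id (cnext i)) = ∏ _i : Fin m, (1 / (m : ℝ)) :=
            Finset.prod_congr rfl fun i _ => hval i
        _ = (1 / (m : ℝ)) ^ m := by rw [Finset.prod_const, Finset.card_univ, Fintype.card_fin]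
    rw [← hid]
    refine Finset.single_le_sum (f := fun f : Fin m → Fin m =>
      if Function.Injective f then cycleWeight μc f else 0) (fun f _ => ?_) (mem_univ id)
    show 0 ≤ (if Function.Injective f then cycleWeight μc f else 0)
    split
    · exact cycleWeight_nonneg hprob.1 _
    · exact le_refl 0
  have hbc : (1 / (m : ℝ)) ^ m / (2 * m) ≤ beta μc m := by
    rw [beta_eq_Tsum]
    exact div_le_div_of_nonneg_right hTpos (by positivity)
  have hle : beta μc m ≤ betaSup m :=
    le_csSup (betaSet_bddAbove hm) ⟨m, μc, hprob, rfl⟩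
  calc (0:ℝ) < (1 / (m : ℝ)) ^ m / (2 * m) := by positivity
    _ ≤ beta μc m := hbc
    _ ≤ betaSup m := hle


lemma card_le_one_cases {α : Type*} [DecidableEq α] (u : Finset α) (h : u.card ≤ 1) :
    u = ∅ ∨ ∃ a, u = {a} := by
  rcases Nat.lt_or_ge u.card 1 with h1 | h1
  · exact Or.inl (Finset.card_eq_zero.mp (by omega))
  · exact Or.inr (Finset.card_eq_one.mp (le_antisymm h h1))

lemma key_est {m : ℕ} (P D : Fin m → ℝ) (hP0 : ∀ i, 0 ≤ P i) (hP1 : ∀ i, P i ≤ 1)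
    (hD : ∀ i, |D i| ≤ 1) {t : ℝ} (ht0 : 0 ≤ t) (ht1 : t ≤ 1) :
    |∏ i, (P i + t * D i) - (∏ i, P i + t * ∑ i, D i * ∏ j ∈ univ.erase i, P j)|
      ≤ 2 ^ m * t ^ 2 := by
  classical
  set F : Finset (Fin m) → ℝ := fun u => (∏ i ∈ u, (t * D i)) * ∏ i ∈ univ \ u, P i with hF
  have hexp : ∏ i, (P i + t * D i) = ∑ u ∈ (univ : Finset (Fin m)).powerset, F u := by
    rw [← Finset.prod_add]
    exact Finset.prod_congr rfl fun i _ => add_comm _ _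
  have hsplit : ∑ u ∈ (univ : Finset (Fin m)).powerset, F u
      = (∑ u ∈ (univ : Finset (Fin m)).powerset.filter (fun u => u.card ≤ 1), F u)
        + ∑ u ∈ (univ : Finset (Fin m)).powerset.filter (fun u => ¬ u.card ≤ 1), F u :=
    (Finset.sum_filter_add_sum_filter_not _ _ _).symm
  have hA : (univ : Finset (Fin m)).powerset.filter (fun u => u.card ≤ 1)
      = insert ∅ (univ.image (fun i : Fin m => ({i} : Finset (Fin m)))) := by
    ext u
    simp only [mem_filter, mem_powerset, mem_insert, mem_image, mem_univ, true_and]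
    constructor
    · rintro ⟨-, hc⟩
      rcases card_le_one_cases u hc with h | ⟨a, ha⟩
      · exact Or.inl h
      · exact Or.inr ⟨a, ha.symm⟩
    · rintro (rfl | ⟨a, rfl⟩)
      · exact ⟨Finset.empty_subset _, by simp⟩
      · exact ⟨Finset.subset_univ _, by simp⟩
  have hlow : ∑ u ∈ (univ : Finset (Fin m)).powerset.filter (fun u => u.card ≤ 1), F u
      = ∏ i, P i + t * ∑ i, D i * ∏ j ∈ univ.erase i, P j := by
    rw [hA, Finset.sum_insert (by simp), Finset.sum_image (fun a _ b _ h => Finset.singleton_injective h)]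
    congr 1
    · simp [hF]
    · rw [Finset.mul_sum]
      refine Finset.sum_congr rfl fun i _ => ?_
      rw [hF]
      dsimp only
      rw [Finset.prod_singleton, Finset.sdiff_singleton_eq_erase]
      ring
  have hFbound : ∀ u ∈ (univ : Finset (Fin m)).powerset.filter (fun u => ¬ u.card ≤ 1),
      |F u| ≤ t ^ 2 := by
    intro u hu
    have hc : 2 ≤ u.card := by
      simp only [mem_filter] at hu
      omega
    rw [hF]
    dsimp only
    rw [abs_mul]
    have h1 : |∏ i ∈ u, (t * D i)| ≤ t ^ 2 := by
      rw [Finset.abs_prod]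
      have : ∀ i ∈ u, |t * D i| ≤ t := fun i _ => by
        rw [abs_mul, abs_of_nonneg ht0]
        calc t * |D i| ≤ t * 1 := by
              exact mul_le_mul_of_nonneg_left (hD i) ht0
          _ = t := mul_one t
      calc ∏ i ∈ u, |t * D i| ≤ ∏ _i ∈ u, t :=
            Finset.prod_le_prod (fun i _ => abs_nonneg _) this
        _ = t ^ u.card := by rw [Finset.prod_const]
        _ ≤ t ^ 2 := pow_le_pow_of_le_one ht0 ht1 hc
    have h2 : |∏ i ∈ univ \ u, P i| ≤ 1 := by
      rw [Finset.abs_prod]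
      refine Finset.prod_le_one (fun i _ => abs_nonneg _) (fun i _ => ?_)
      rw [abs_of_nonneg (hP0 i)]
      exact hP1 i
    calc |∏ i ∈ u, (t * D i)| * |∏ i ∈ univ \ u, P i| ≤ t ^ 2 * 1 :=
          mul_le_mul h1 h2 (abs_nonneg _) (by positivity)
      _ = t ^ 2 := mul_one _
  have hhigh : |∑ u ∈ (univ : Finset (Fin m)).powerset.filter (fun u => ¬ u.card ≤ 1), F u|
      ≤ 2 ^ m * t ^ 2 := by
    calc |∑ u ∈ (univ : Finset (Fin m)).powerset.filter (fun u => ¬ u.card ≤ 1), F u|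
        ≤ ∑ u ∈ (univ : Finset (Fin m)).powerset.filter (fun u => ¬ u.card ≤ 1), |F u| :=
          Finset.abs_sum_le_sum_abs _ _
      _ ≤ ∑ _u ∈ (univ : Finset (Fin m)).powerset.filter (fun u => ¬ u.card ≤ 1), t ^ 2 :=
          Finset.sum_le_sum hFbound
      _ = ((univ : Finset (Fin m)).powerset.filter (fun u => ¬ u.card ≤ 1)).card • t ^ 2 :=
          Finset.sum_const _
      _ ≤ 2 ^ m * t ^ 2 := by
          rw [nsmul_eq_mul]
          refine mul_le_mul_of_nonneg_right ?_ (by positivity)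
          have h3 : ((univ : Finset (Fin m)).powerset.filter (fun u => ¬ u.card ≤ 1)).card
              ≤ (univ : Finset (Fin m)).powerset.card :=
            Finset.card_le_card (Finset.filter_subset _ _)
          rw [Finset.card_powerset, Finset.card_univ, Fintype.card_fin] at h3
          exact_mod_cast h3
  rw [hexp, hsplit, hlow]
  simpa using hhigh

noncomputable def Dco {X : Type*} [Fintype X] [DecidableEq X] (μ : Sym2 X → ℝ) (m : ℕ)
    (e : Sym2 X) : ℝ :=
  ∑ f : Fin m → X, if Function.Injective f then
    ∑ i : Fin m, (if s(f i, f (cnext i)) = e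
      then ∏ j ∈ univ.erase i, μ s(f j, f (cnext j)) else 0)
  else 0

section
variable {X : Type*} [Fintype X] [DecidableEq X] {μ : Sym2 X → ℝ} {m : ℕ}

lemma Dco_le (hm : 3 ≤ m) (hμ : IsProbMass μ) (hopt : beta μ m = betaSup m)
    {e₀ e₁ : Sym2 X} (h0 : 0 < μ e₀) (h1 : ¬ e₁.IsDiag) :
    Dco μ m e₁ ≤ Dco μ m e₀ := by
  classical
  rcases eq_or_ne e₁ e₀ with rfl | hne
  · exact le_refl _
  set d : Sym2 X → ℝ := fun e => (if e = e₁ then (1:ℝ) else 0) - (if e = e₀ then 1 else 0)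
    with hdd
  have hd : ∀ e, |d e| ≤ 1 := by
    intro e
    rw [hdd]
    dsimp only
    split_ifs <;> norm_num
  have h0d : ¬ e₀.IsDiag := fun h => absurd (hμ.2.1 _ h) (by linarith)
  set B := Dco μ m e₁ - Dco μ m e₀ with hB
  -- perturbed masses are probability masses
  have hprob : ∀ t : ℝ, 0 ≤ t → t ≤ μ e₀ → IsProbMass (fun e => μ e + t * d e) := by
    intro t ht0 ht1
    refine ⟨fun e => ?_, fun e he => ?_, ?_⟩
    · rw [hdd]
      dsimp only
      rcases eq_or_ne e e₀ with rfl | hene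
      · rw [if_neg (fun h : e = e₁ => hne h.symm), if_pos rfl]
        linarith
      · rw [if_neg hene]
        rcases eq_or_ne e e₁ with rfl | hene1
        · rw [if_pos rfl]
          have := hμ.1 e
          linarith
        · rw [if_neg hene1]
          have := hμ.1 e
          linarith
    · rw [hdd]
      dsimp only
      rw [if_neg (fun h : e = e₁ => h1 (h ▸ he)), if_neg (fun h : e = e₀ => h0d (h ▸ he)),
        hμ.2.1 e he]
      ring
    · rw [Finset.sum_add_distrib, hμ.2.2, ← Finset.mul_sum]
      have : ∑ e : Sym2 X, d e = 0 := by
        rw [hdd]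
        rw [Finset.sum_sub_distrib]
        rw [Finset.sum_ite_eq' univ e₁ (fun _ => (1:ℝ)),
          Finset.sum_ite_eq' univ e₀ (fun _ => (1:ℝ))]
        simp
      rw [this, mul_zero, add_zero]
  -- the first-order estimate
  have hest : ∀ t : ℝ, 0 ≤ t → t ≤ 1 →
      |Tsum (fun e => μ e + t * d e) m - (Tsum μ m + t * B)| ≤
        (Fintype.card X : ℝ) ^ m * (2 ^ m * t ^ 2) := by
    intro t ht0 ht1
    have hBsum : Tsum μ m + t * B = ∑ f : Fin m → X, (if Function.Injective f then
        (∏ i, μ s(f i, f (cnext i))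
          + t * ∑ i, d s(f i, f (cnext i)) * ∏ j ∈ univ.erase i, μ s(f j, f (cnext j)))
        else 0) := by
      rw [hB, Dco, Dco, Tsum]
      rw [mul_sub, Finset.mul_sum, Finset.mul_sum, ← Finset.sum_sub_distrib,
        ← Finset.sum_add_distrib]
      refine Finset.sum_congr rfl fun f _ => ?_
      by_cases hf : Function.Injective f
      · simp only [hf, if_true, cycleWeight]
        rw [Finset.mul_sum, Finset.mul_sum, ← Finset.sum_sub_distrib, Finset.mul_sum]
        congr 1
        refine Finset.sum_congr rfl fun i _ => ?_
        rw [hdd]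
        dsimp only
        split_ifs <;> ring
      · simp [hf]
    rw [hBsum, Tsum, ← Finset.sum_sub_distrib]
    calc |∑ f : Fin m → X, ((if Function.Injective f then cycleWeight (fun e => μ e + t * d e) f else 0)
            - (if Function.Injective f then
              (∏ i, μ s(f i, f (cnext i))
                + t * ∑ i, d s(f i, f (cnext i)) * ∏ j ∈ univ.erase i, μ s(f j, f (cnext j)))
              else 0))|
        ≤ ∑ f : Fin m → X, |(if Function.Injective f then cycleWeight (fun e => μ e + t * d e) f else 0)
            - (if Function.Injective f then
              (∏ i, μ s(f i, f (cnext i))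
                + t * ∑ i, d s(f i, f (cnext i)) * ∏ j ∈ univ.erase i, μ s(f j, f (cnext j)))
              else 0)| := Finset.abs_sum_le_sum_abs _ _
      _ ≤ ∑ _f : Fin m → X, 2 ^ m * t ^ 2 := by
          refine Finset.sum_le_sum fun f _ => ?_
          by_cases hf : Function.Injective f
          · simp only [hf, if_true, cycleWeight]
            exact key_est (fun i => μ s(f i, f (cnext i))) (fun i => d s(f i, f (cnext i)))
              (fun i => hμ.1 _) (fun i => hμ.le_one _) (fun i => hd _) ht0 ht1
          · simp only [hf, if_false, sub_zero, abs_zero]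
            positivity
      _ = (Fintype.card X : ℝ) ^ m * (2 ^ m * t ^ 2) := by
          rw [Finset.sum_const, Finset.card_univ, nsmul_eq_mul]
          norm_num [Fintype.card_fun]
  -- optimality gives monotonicity
  have hg : ∀ t : ℝ, 0 ≤ t → t ≤ μ e₀ → Tsum (fun e => μ e + t * d e) m ≤ Tsum μ m := by
    intro t ht0 ht1
    have hb := beta_le_betaSup hm (hprob t ht0 ht1)
    rw [hopt.symm] at hb
    rw [beta_eq_Tsum, beta_eq_Tsum] at hb
    have h2m : (0:ℝ) < 2 * m := by
      have : (3:ℝ) ≤ m := by exact_mod_cast hm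
      linarith
    exact (div_le_div_iff_of_pos_right h2m).mp hb
  -- conclude B ≤ 0
  rw [← sub_nonpos, ← hB]
  by_contra hBpos
  push_neg at hBpos
  set M : ℝ := (Fintype.card X : ℝ) ^ m * 2 ^ m with hM
  have hM0 : 0 ≤ M := by positivity
  set t : ℝ := min (min (μ e₀) 1) (B / (M + 1)) with htdef
  have ht0 : 0 < t := by
    apply lt_min (lt_min h0 one_pos)
    positivity
  have ht1 : t ≤ 1 := le_trans (min_le_left _ _) (min_le_right _ _)
  have htμ : t ≤ μ e₀ := le_trans (min_le_left _ _) (min_le_left _ _)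
  have htB : t ≤ B / (M + 1) := min_le_right _ _
  have h5 := hest t (le_of_lt ht0) ht1
  have h6 := hg t (le_of_lt ht0) htμ
  have h7 : t * B ≤ M * t ^ 2 := by
    have := (abs_le.mp h5).1
    rw [hM]
    nlinarith
  have h8 : B ≤ M * t := by
    have h9 : t * B ≤ (M * t) * t := by nlinarith
    exact le_of_mul_le_mul_right (by nlinarith) ht0
  have h10 : t * (M + 1) ≤ B := (le_div_iff₀ (by positivity)).mp htB
  nlinarith

end

section
variable {X : Type*} [Fintype X] [DecidableEq X] {μ : Sym2 X → ℝ} {m : ℕ}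


lemma wdeg_eq (hμ : IsProbMass μ) (x : X) :
    wdeg μ x = ∑ e : Sym2 X, (if x ∈ e then μ e else 0) := by
  classical
  rw [← Finset.sum_filter]
  have hsub : univ.filter (fun e : Sym2 X => x ∈ e ∧ ¬ e.IsDiag)
      ⊆ univ.filter (fun e : Sym2 X => x ∈ e) := by
    intro e he
    simp only [mem_filter, mem_univ, true_and] at he ⊢
    exact he.1
  have hzero : ∀ e ∈ univ.filter (fun e : Sym2 X => x ∈ e),
      e ∉ univ.filter (fun e : Sym2 X => x ∈ e ∧ ¬ e.IsDiag) → μ e = 0 := by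
    intro e he hne
    simp only [mem_filter, mem_univ, true_and, not_and, not_not] at he hne
    exact hμ.2.1 e (hne he)
  rw [← Finset.sum_subset hsub hzero]
  refine Finset.sum_bij' (fun y _ => s(x, y))
    (fun e he => Sym2.Mem.other' (mem_filter.mp he).2.1) ?_ ?_ ?_ ?_ ?_
  · intro y hy
    simp only [mem_filter, mem_univ, true_and] at hy ⊢
    exact ⟨Sym2.mem_mk_left x y, fun hd => hy (Sym2.mk_isDiag_iff.mp hd).symm⟩
  · intro e he
    simp only [mem_filter, mem_univ, true_and] at he ⊢
    intro hother
    apply he.2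
    have hsp := Sym2.other_spec' he.1
    rw [hother] at hsp
    rw [← hsp]
    exact Sym2.mk_isDiag_iff.mpr rfl
  · intro y hy
    simp only [mem_filter, mem_univ, true_and] at hy
    have hspec := Sym2.other_spec' (Sym2.mem_mk_left x y)
    rcases Sym2.eq_iff.mp hspec with ⟨-, h2⟩ | ⟨h1, -⟩
    · exact h2
    · exact absurd h1.symm hy
  · intro e he
    exact Sym2.other_spec' (mem_filter.mp he).2.1
  · intro y hy
    rfl

lemma count_mem (hm : 3 ≤ m) {f : Fin m → X} (hf : Function.Injective f) (x : X) (c : ℝ) :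
    ∑ i : Fin m, (if x ∈ s(f i, f (cnext i)) then c else 0)
      = if ∃ i, f i = x then 2 * c else 0 := by
  classical
  haveI : NeZero m := ⟨by omega⟩
  by_cases hex : ∃ i, f i = x
  · obtain ⟨i₀, hi₀⟩ := hex
    rw [if_pos ⟨i₀, hi₀⟩]
    rw [← Finset.sum_filter]
    have hfil : univ.filter (fun i : Fin m => x ∈ s(f i, f (cnext i)))
        = {i₀ - 1, i₀} := by
      ext i
      simp only [mem_filter, mem_univ, true_and, Sym2.mem_iff, mem_insert, mem_singleton]
      constructor
      · rintro (h | h)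
        · exact Or.inr (hf (by rw [hi₀]; exact h.symm))
        · have hci : cnext i = i₀ := hf (by rw [hi₀]; exact h.symm)
          refine Or.inl (eq_sub_iff_add_eq.mpr ?_)
          rw [← cnext_eq_add_one]
          exact hci
      · rintro (rfl | rfl)
        · refine Or.inr ?_
          rw [cnext_eq_add_one, sub_add_cancel]
          exact hi₀.symm
        · exact Or.inl hi₀.symm
    rw [hfil]
    rw [Finset.sum_insert (by
      simp only [mem_singleton]
      intro h
      exact cnext_ne hm i₀ (by rw [cnext_eq_add_one]; exact (sub_eq_iff_eq_add.mp h).symm)),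
      Finset.sum_singleton]
    ring
  · rw [if_neg hex]
    refine Finset.sum_eq_zero fun i _ => ?_
    rw [if_neg]
    rw [Sym2.mem_iff]
    push_neg
    push_neg at hex
    exact ⟨fun h => hex i h.symm, fun h => hex (cnext i) h.symm⟩

end

section
variable {X : Type*} [Fintype X] [DecidableEq X] {μ : Sym2 X → ℝ} {m : ℕ}

lemma sum_mu_Dco : ∑ e : Sym2 X, μ e * Dco μ m e = m * Tsum μ m := by
  classical
  calc ∑ e : Sym2 X, μ e * Dco μ m e
      = ∑ e : Sym2 X, ∑ f : Fin m → X, (if Function.Injective f then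
          ∑ i : Fin m, (if s(f i, f (cnext i)) = e
            then μ e * ∏ j ∈ univ.erase i, μ s(f j, f (cnext j)) else 0) else 0) := by
        refine Finset.sum_congr rfl fun e _ => ?_
        unfold Dco
        rw [Finset.mul_sum]
        refine Finset.sum_congr rfl fun f _ => ?_
        by_cases hf : Function.Injective f
        · simp only [hf, if_true]
          rw [Finset.mul_sum]
          refine Finset.sum_congr rfl fun i _ => ?_
          rw [mul_ite, mul_zero]
        · simp [hf]
    _ = ∑ f : Fin m → X, ∑ e : Sym2 X, (if Function.Injective f then
          ∑ i : Fin m, (if s(f i, f (cnext i)) = e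
            then μ e * ∏ j ∈ univ.erase i, μ s(f j, f (cnext j)) else 0) else 0) :=
        Finset.sum_comm
    _ = ∑ f : Fin m → X, (if Function.Injective f then (m : ℝ) * cycleWeight μ f else 0) := by
        refine Finset.sum_congr rfl fun f _ => ?_
        by_cases hf : Function.Injective f
        · simp only [hf, if_true]
          rw [Finset.sum_comm]
          calc ∑ i : Fin m, ∑ e : Sym2 X, (if s(f i, f (cnext i)) = e
                then μ e * ∏ j ∈ univ.erase i, μ s(f j, f (cnext j)) else 0)
              = ∑ i : Fin m, μ s(f i, f (cnext i)) * ∏ j ∈ univ.erase i, μ s(f j, f (cnext j)) := by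
                refine Finset.sum_congr rfl fun i _ => ?_
                rw [Finset.sum_ite_eq univ (s(f i, f (cnext i)))
                  (fun e => μ e * ∏ j ∈ univ.erase i, μ s(f j, f (cnext j)))]
                rw [if_pos (mem_univ _)]
            _ = ∑ _i : Fin m, cycleWeight μ f := by
                refine Finset.sum_congr rfl fun i _ => ?_
                rw [Finset.mul_prod_erase univ (fun j => μ s(f j, f (cnext j))) (mem_univ i)]
                rfl
            _ = (m : ℝ) * cycleWeight μ f := by
                rw [Finset.sum_const, Finset.card_univ, Fintype.card_fin, nsmul_eq_mul]
        · simp [hf]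
    _ = m * Tsum μ m := by
        rw [Tsum, Finset.mul_sum]
        refine Finset.sum_congr rfl fun f _ => ?_
        rw [mul_ite, mul_zero]

lemma sum_mu_Dco_mem (hm : 3 ≤ m) (x : X) :
    ∑ e : Sym2 X, (if x ∈ e then μ e * Dco μ m e else 0)
      = 2 * ∑ f : Fin m → X,
          (if Function.Injective f ∧ (∃ i, f i = x) then cycleWeight μ f else 0) := by
  classical
  calc ∑ e : Sym2 X, (if x ∈ e then μ e * Dco μ m e else 0)
      = ∑ e : Sym2 X, ∑ f : Fin m → X, (if Function.Injective f then
          ∑ i : Fin m, (if s(f i, f (cnext i)) = e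
            then (if x ∈ e then μ e * ∏ j ∈ univ.erase i, μ s(f j, f (cnext j)) else 0)
            else 0) else 0) := by
        refine Finset.sum_congr rfl fun e _ => ?_
        by_cases hx : x ∈ e
        · rw [if_pos hx]
          unfold Dco
          rw [Finset.mul_sum]
          refine Finset.sum_congr rfl fun f _ => ?_
          by_cases hf : Function.Injective f
          · simp only [hf, if_true]
            rw [Finset.mul_sum]
            refine Finset.sum_congr rfl fun i _ => ?_
            by_cases hE : s(f i, f (cnext i)) = e <;> simp [hE, hx]
          · simp [hf]
        · rw [if_neg hx]
          symm
          refine Finset.sum_eq_zero fun f _ => ?_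
          by_cases hf : Function.Injective f
          · simp only [hf, if_true]
            refine Finset.sum_eq_zero fun i _ => ?_
            by_cases hE : s(f i, f (cnext i)) = e <;> simp [hE, hx]
          · simp [hf]
    _ = ∑ f : Fin m → X, ∑ e : Sym2 X, (if Function.Injective f then
          ∑ i : Fin m, (if s(f i, f (cnext i)) = e
            then (if x ∈ e then μ e * ∏ j ∈ univ.erase i, μ s(f j, f (cnext j)) else 0)
            else 0) else 0) := Finset.sum_comm
    _ = ∑ f : Fin m → X, (if Function.Injective f then
          ∑ i : Fin m, (if x ∈ s(f i, f (cnext i)) then cycleWeight μ f else 0) else 0) := by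
        refine Finset.sum_congr rfl fun f _ => ?_
        by_cases hf : Function.Injective f
        · simp only [hf, if_true]
          rw [Finset.sum_comm]
          refine Finset.sum_congr rfl fun i _ => ?_
          rw [Finset.sum_ite_eq univ (s(f i, f (cnext i)))
            (fun e => if x ∈ e then μ e * ∏ j ∈ univ.erase i, μ s(f j, f (cnext j)) else 0)]
          rw [if_pos (mem_univ _)]
          by_cases hx : x ∈ s(f i, f (cnext i))
          · rw [if_pos hx, if_pos hx,
              Finset.mul_prod_erase univ (fun j => μ s(f j, f (cnext j))) (mem_univ i)]
            rfl
          · rw [if_neg hx, if_neg hx]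
        · simp [hf]
    _ = ∑ f : Fin m → X, (if Function.Injective f then
          (if ∃ i, f i = x then 2 * cycleWeight μ f else 0) else 0) := by
        refine Finset.sum_congr rfl fun f _ => ?_
        by_cases hf : Function.Injective f
        · simp only [hf, if_true]
          exact count_mem hm hf x (cycleWeight μ f)
        · simp [hf]
    _ = 2 * ∑ f : Fin m → X,
          (if Function.Injective f ∧ (∃ i, f i = x) then cycleWeight μ f else 0) := by
        rw [Finset.mul_sum]
        refine Finset.sum_congr rfl fun f _ => ?_
        by_cases hf : Function.Injective f
        · by_cases hex : ∃ i, f i = x <;> simp [hf, hex]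
        · simp [hf]

end

/-- For `m ≥ 3` and `μ ∈ Opt(m)`: any vertex `x ∈ supp μ̄` satisfies `μ̄(x) ≤ 2/m`, with
equality iff `x` belongs to every unlabeled `m`-cycle of the support graph `G_μ`. -/
theorem wdeg_upperbound (m : ℕ) (hm : 3 ≤ m) {X : Type*} [Fintype X] [DecidableEq X]
    (μ : Sym2 X → ℝ) (hμ : IsProbMass μ) (hopt : beta μ m = betaSup m)
    (x : X) (hx : 0 < wdeg μ x) :
    wdeg μ x ≤ 2 / m ∧
      (wdeg μ x = 2 / m ↔ ∀ f : Fin m → X, Function.Injective f →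
        (∀ i, 0 < μ s(f i, f (cnext i))) → ∃ i, f i = x) := by
  classical
  have hmR : (3:ℝ) ≤ (m:ℝ) := by exact_mod_cast hm
  set T := Tsum μ m with hT
  set Tx := ∑ f : Fin m → X,
    (if Function.Injective f ∧ (∃ i, f i = x) then cycleWeight μ f else 0) with hTx
  have hTpos : 0 < T := by
    have h1 : 0 < betaSup m := betaSup_pos hm
    rw [← hopt, beta_eq_Tsum] at h1
    have h2 : (0:ℝ) < 2 * m := by linarith
    have h3 := mul_pos h1 h2
    rwa [div_mul_cancel₀ _ (ne_of_gt h2)] at h3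
  have hex : ∃ ee : Sym2 X, 0 < μ ee := by
    by_contra h
    push_neg at h
    have h4 : (∑ e : Sym2 X, μ e) ≤ 0 := Finset.sum_nonpos fun e _ => h e
    rw [hμ.2.2] at h4
    linarith
  obtain ⟨ee, hee⟩ := hex
  have heed : ¬ ee.IsDiag := fun h => absurd (hμ.2.1 _ h) (by linarith)
  have hconst : ∀ e : Sym2 X, 0 < μ e → Dco μ m e = Dco μ m ee := fun e he =>
    le_antisymm (Dco_le hm hμ hopt hee (fun h => absurd (hμ.2.1 _ h) (by linarith)))
      (Dco_le hm hμ hopt he heed)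
  have hmul : ∀ e : Sym2 X, μ e * Dco μ m e = μ e * Dco μ m ee := by
    intro e
    rcases (hμ.1 e).lt_or_eq with h | h
    · rw [hconst e h]
    · rw [← h, zero_mul, zero_mul]
  have hDval : Dco μ m ee = m * T := by
    calc Dco μ m ee = (∑ e : Sym2 X, μ e) * Dco μ m ee := by rw [hμ.2.2, one_mul]
      _ = ∑ e : Sym2 X, μ e * Dco μ m e := by
          rw [Finset.sum_mul]
          exact Finset.sum_congr rfl fun e _ => (hmul e).symm
      _ = m * T := sum_mu_Dco
  have hkey : wdeg μ x * (m * T) = 2 * Tx := by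
    calc wdeg μ x * (m * T)
        = (∑ e : Sym2 X, (if x ∈ e then μ e else 0)) * (m * T) := by rw [wdeg_eq hμ x]
      _ = ∑ e : Sym2 X, (if x ∈ e then μ e * Dco μ m e else 0) := by
          rw [Finset.sum_mul]
          refine Finset.sum_congr rfl fun e _ => ?_
          by_cases hx' : x ∈ e
          · rw [if_pos hx', if_pos hx', hmul e, hDval]
          · rw [if_neg hx', if_neg hx', zero_mul]
      _ = 2 * Tx := sum_mu_Dco_mem hm x
  have hTxT : Tx ≤ T := by
    rw [hT, hTx, Tsum]
    refine Finset.sum_le_sum fun f _ => ?_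
    by_cases h1 : Function.Injective f ∧ ∃ i, f i = x
    · rw [if_pos h1, if_pos h1.1]
    · rw [if_neg h1]
      by_cases h2 : Function.Injective f
      · rw [if_pos h2]
        exact cycleWeight_nonneg hμ.1 f
      · rw [if_neg h2]
  have hmT : 0 < (m:ℝ) * T := mul_pos (by linarith) hTpos
  have hwd : wdeg μ x = 2 * Tx / (m * T) := (eq_div_iff (ne_of_gt hmT)).mpr hkey
  have hineq : wdeg μ x ≤ 2 / m := by
    rw [hwd, div_le_div_iff₀ hmT (show (0:ℝ) < m by linarith)]
    nlinarith [hTxT]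
  refine ⟨hineq, ?_⟩
  have hiff1 : wdeg μ x = 2 / m ↔ Tx = T := by
    constructor
    · intro h
      rw [h] at hkey
      have hm0 : (m:ℝ) ≠ 0 := by linarith
      field_simp at hkey
      have h9 : (m:ℝ) * (T - Tx) = 0 := by nlinarith [hkey]
      rcases mul_eq_zero.mp h9 with h10 | h10
      · exact absurd h10 hm0
      · linarith
    · intro h
      rw [hwd, h, div_eq_div_iff (ne_of_gt hmT) (show (m:ℝ) ≠ 0 by linarith)]
      ring
  rw [hiff1]
  constructor
  · intro hTeq f hf hpos
    by_contra hno
    push_neg at hno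
    have hzero : ∑ f : Fin m → X, ((if Function.Injective f then cycleWeight μ f else 0)
        - (if Function.Injective f ∧ (∃ i, f i = x) then cycleWeight μ f else 0)) = 0 := by
      rw [Finset.sum_sub_distrib]
      rw [← Tsum, ← hT, ← hTx, hTeq]
      ring
    have hnn : ∀ g ∈ (univ : Finset (Fin m → X)),
        0 ≤ ((if Function.Injective g then cycleWeight μ g else 0)
          - (if Function.Injective g ∧ (∃ i, g i = x) then cycleWeight μ g else 0)) := by
      intro g _
      by_cases h1 : Function.Injective g ∧ ∃ i, g i = x
      · rw [if_pos h1, if_pos h1.1, sub_self]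
      · rw [if_neg h1]
        by_cases h2 : Function.Injective g
        · rw [if_pos h2, sub_zero]
          exact cycleWeight_nonneg hμ.1 g
        · rw [if_neg h2, sub_zero]
    have hfz := (Finset.sum_eq_zero_iff_of_nonneg hnn).mp hzero f (mem_univ f)
    rw [if_pos hf, if_neg (fun h : _ ∧ (∃ i, f i = x) => hno h.2.choose h.2.choose_spec),
      sub_zero] at hfz
    have hcw : 0 < cycleWeight μ f := Finset.prod_pos fun i _ => hpos i
    rw [hfz] at hcw
    exact lt_irrefl 0 hcw
  · intro hall
    refine le_antisymm hTxT ?_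
    rw [hT, hTx, Tsum]
    refine Finset.sum_le_sum fun f _ => ?_
    by_cases hf : Function.Injective f
    · by_cases hex2 : ∃ i, f i = x
      · rw [if_pos hf, if_pos ⟨hf, hex2⟩]
      · rw [if_pos hf, if_neg (fun h : _ ∧ (∃ i, f i = x) => hex2 h.2)]
        have hcw0 : cycleWeight μ f = 0 := by
          by_contra hcw
          refine hex2 (hall f hf fun i => ?_)
          rcases (hμ.1 s(f i, f (cnext i))).lt_or_eq with h | h
          · exact h
          · exact absurd (Finset.prod_eq_zero (mem_univ i) h.symm) hcw
        rw [hcw0]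
    · rw [if_neg hf, if_neg (fun h : Function.Injective f ∧ _ => hf h.1)]
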